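/- Let G be a 2-connected multigraph and let G' be obtained from G by a YY-Δ transformation. Then G' is 2-connected. -/

import Mathlib

open scoped Classical

noncomputable section

/-- A multigraph: a finite vertex type together with a symmetric multiplicity
function recording the size of the connection (set of parallel edges) between
any two vertices; there are no loops. -/
structure MG : Type 1 where
  V : Type
  fin : Fintype V
  mult : V → V → ℕ
  symm : ∀ u v, mult u v = mult v u
  loopless : ∀ v, mult v v = 0

namespace MG

/-- Two vertices are adjacent when their connection is non-empty. -/
def Adj (G : MG) (u v : G.V) : Prop := 0 < G.mult u v

/-- Connection size as a function on unordered pairs of vertices. -/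
def multS (G : MG) : Sym2 G.V → ℕ := Sym2.lift ⟨G.mult, G.symm⟩

/-- Number of vertices. -/
def order (G : MG) : ℕ := @Fintype.card G.V G.fin

/-- Degree of a vertex, counting edges with multiplicity. -/
def deg (G : MG) (v : G.V) : ℕ :=
  haveI := G.fin
  ∑ u, G.mult v u

/-- `G` is `k`-regular. -/
def Regular (G : MG) (k : ℕ) : Prop := ∀ v, G.deg v = k

/-- A simple graph: every connection has size at most 1. -/
def Simple (G : MG) : Prop := ∀ u v, G.mult u v ≤ 1

/-- Isomorphism of multigraphs. -/
def Iso (G H : MG) : Prop :=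
  ∃ e : G.V ≃ H.V, ∀ u v, H.mult (e u) (e v) = G.mult u v

/-- Indicator: is `{a,b}` one of the three pairs `{u,v}, {u,w}, {v,w}`? -/
def triCount {V : Type} (u v w a b : V) : ℕ :=
  if s(a, b) ∈ ({s(u, v), s(u, w), s(v, w)} : Set (Sym2 V)) then 1 else 0

lemma triCount_symm {V : Type} (u v w a b : V) :
    triCount u v w a b = triCount u v w b a := by
  unfold triCount
  have h : s(a, b) = s(b, a) := Sym2.eq_swap
  rw [h]

/-- `u, v, w` form a delta (triangle): pairwise distinct and pairwise adjacent. -/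
def IsDelta (G : MG) (u v w : G.V) : Prop :=
  u ≠ v ∧ u ≠ w ∧ v ≠ w ∧ G.Adj u v ∧ G.Adj u w ∧ G.Adj v w

/-- `x` is the centre of a wye with external vertices `u, v, w`: the edges
incident to `x` are exactly two parallel edges to each of `u, v, w`. -/
def IsWye (G : MG) (x u v w : G.V) : Prop :=
  u ≠ v ∧ u ≠ w ∧ v ≠ w ∧ x ≠ u ∧ x ≠ v ∧ x ≠ w ∧
    G.mult x u = 2 ∧ G.mult x v = 2 ∧ G.mult x w = 2 ∧
    ∀ y : G.V, y ≠ u → y ≠ v → y ≠ w → G.mult x y = 0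

/-- Multiplicity function of the result of a Δ-YY transformation on the
delta `u, v, w`; the new vertex `x` is `none`. -/
def deltaMult (G : MG) (u v w : G.V) : Option G.V → Option G.V → ℕ
  | none, none => 0
  | none, some b => if b = u ∨ b = v ∨ b = w then 2 else 0
  | some a, none => if a = u ∨ a = v ∨ a = w then 2 else 0
  | some a, some b => G.mult a b - triCount u v w a b

/-- The result of the Δ-YY transformation on the delta `u, v, w`: one edge of
each of the connections `uv`, `uw`, `vw` is removed, a new vertex (`none`) is
added, joined by two parallel edges to each of `u, v, w`. -/
def deltaYY (G : MG) (u v w : G.V) : MG where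
  V := Option G.V
  fin := by haveI := G.fin; infer_instance
  mult := G.deltaMult u v w
  symm := by
    rintro (_ | a) (_ | b)
    · rfl
    · rfl
    · rfl
    · show G.mult a b - triCount u v w a b = G.mult b a - triCount u v w b a
      rw [G.symm a b, triCount_symm]
  loopless := by
    rintro (_ | a)
    · rfl
    · show G.mult a a - triCount u v w a a = 0
      rw [G.loopless]
      exact Nat.zero_sub _

/-- The result of the YY-Δ transformation on a wye with centre `x` and external
vertices `u, v, w`: the vertex `x` is deleted together with all its incident
edges, and one new edge is added to each of the connections `uv`, `uw`, `vw`. -/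
def yyDelta (G : MG) (x u v w : G.V) : MG where
  V := {y : G.V // y ≠ x}
  fin := by haveI := G.fin; infer_instance
  mult a b := if a = b then 0 else G.mult a.1 b.1 + triCount u v w a.1 b.1
  symm := by
    intro a b
    try dsimp only
    rcases eq_or_ne a b with h | h
    · subst h; rfl
    · rw [if_neg h, if_neg h.symm, G.symm a.1 b.1, triCount_symm]
  loopless := fun a => if_pos rfl

/-- `G'` is obtained from `G` by a Δ-YY transformation. -/
def DeltaYYStep (G G' : MG) : Prop :=
  ∃ u v w : G.V, G.IsDelta u v w ∧ Iso (G.deltaYY u v w) G'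

/-- `G'` is obtained from `G` by a YY-Δ transformation. -/
def YYDeltaStep (G G' : MG) : Prop :=
  ∃ x u v w : G.V, G.IsWye x u v w ∧ Iso (G.yyDelta x u v w) G'

/-- `G'` is obtained from `G` by a Δ-YY operation (either a Δ-YY transformation
or a YY-Δ transformation). -/
def Step (G G' : MG) : Prop := DeltaYYStep G G' ∨ YYDeltaStep G G'

/-- Δ-YY equivalence: `G` can be transformed into `H`, up to isomorphism, by a
finite sequence of Δ-YY operations. -/
def DYYEquiv : MG → MG → Prop :=
  Relation.EqvGen (fun G G' => Step G G' ∨ Iso G G')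

/-- The Δ-YY equivalence class of `G` contains only finitely many isomorphism
classes of multigraphs. -/
def FiniteClass (G : MG) : Prop :=
  ∃ S : Finset MG, ∀ H : MG, DYYEquiv G H → ∃ H' ∈ S, Iso H H'

/-- Connectivity: nonempty, and any two vertices are joined by a path. -/
def Connected (G : MG) : Prop :=
  Nonempty G.V ∧ ∀ u v : G.V, Relation.ReflTransGen G.Adj u v

/-- The multigraph obtained by deleting a set of vertices (and all edges
incident to them). -/
def deleteVerts (G : MG) (S : Set G.V) : MG where
  V := {y : G.V // y ∉ S}
  fin := by haveI := G.fin; infer_instance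
  mult a b := G.mult a.1 b.1
  symm := fun a b => G.symm a.1 b.1
  loopless := fun a => G.loopless a.1

/-- `G` is `k`-connected: it has more than `k` vertices and deleting any set of
fewer than `k` vertices leaves a connected multigraph. -/
def KConnected (G : MG) (k : ℕ) : Prop :=
  k < G.order ∧ ∀ S : Set G.V, S.ncard < k → (G.deleteVerts S).Connected

/-- `G` is planar: it has a drawing in the plane in which vertices are distinct
points, every edge (each parallel edge separately) is a continuous injective
arc joining the points of its endpoints, no arc passes through a vertex point
in its interior, and the interiors of the arcs of distinct edges are disjoint.
The arc of the `k`-th edge from `v` to `u` is the reverse of the arc of the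
`k`-th edge from `u` to `v` (they are the same edge drawn once). -/
def IsPlanar (G : MG) : Prop :=
  ∃ (pos : G.V → ℝ × ℝ) (γ : G.V → G.V → ℕ → C(unitInterval, ℝ × ℝ)),
    Function.Injective pos ∧
    (∀ u v k, k < G.mult u v →
      γ u v k 0 = pos u ∧ γ u v k 1 = pos v ∧ Function.Injective (γ u v k)) ∧
    (∀ u v k (t : unitInterval), γ v u k t = γ u v k (unitInterval.symm t)) ∧
    (∀ u v k, k < G.mult u v → ∀ t : unitInterval, t ≠ 0 → t ≠ 1 →
      ∀ z : G.V, γ u v k t ≠ pos z) ∧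
    (∀ u v k u' v' k', k < G.mult u v → k' < G.mult u' v' →
      (s(u, v) ≠ s(u', v') ∨ k ≠ k') →
      ∀ t t' : unitInterval, t ≠ 0 → t ≠ 1 → t' ≠ 0 → t' ≠ 1 →
        γ u v k t ≠ γ u' v' k' t')

/-- An independent set: no two of its vertices are adjacent. -/
def IsIndepSet (G : MG) (S : Set G.V) : Prop :=
  ∀ u ∈ S, ∀ v ∈ S, ¬ G.Adj u v

/-- The independence number `α(G)`: the maximum size of an independent set. -/
def indepNum (G : MG) : ℕ :=
  sSup {n | ∃ S : Set G.V, G.IsIndepSet S ∧ S.ncard = n}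

/-- The number of non-empty connections, i.e. the number of edges of the
simplification `G^S`. -/
def numConn (G : MG) : ℕ := {p : Sym2 G.V | G.multS p ≠ 0}.ncard

/-- The cyclomatic number `m - n + 1` of the simplification `G^S` of `G`. -/
def cyclomaticS (G : MG) : ℤ := (G.numConn : ℤ) - (G.order : ℤ) + 1

/-- `AddOnAt G a S` : the vertex set `S` of `G` carries (a subgraph copy of) an
add-on whose addition vertex is `a`.  An add-on of length 0 is a double edge or
a delta; an add-on of length `n ≥ 1` is a 4-cycle `a b c d` with the
connections `ab`, `ad` of size 1 and `bc`, `cd` of size 2, glued at `c` to an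
add-on of length `n - 1`. -/
inductive AddOnAt (G : MG) : G.V → Set G.V → Prop
  | double (a b : G.V) : a ≠ b → 2 ≤ G.mult a b → AddOnAt G a {a, b}
  | delta (a b c : G.V) : a ≠ b → a ≠ c → b ≠ c →
      1 ≤ G.mult a b → 1 ≤ G.mult a c → 1 ≤ G.mult b c → AddOnAt G a {a, b, c}
  | link (a b c d : G.V) (S : Set G.V) :
      a ≠ b → a ≠ c → a ≠ d → b ≠ c → b ≠ d → c ≠ d →
      1 ≤ G.mult a b → 1 ≤ G.mult a d → 2 ≤ G.mult b c → 2 ≤ G.mult c d →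
      AddOnAt G c S → S ∩ {a, b, d} = ∅ → AddOnAt G a ({a, b, d} ∪ S)

/-- `G` contains one of the four families of excluded subgraphs. -/
def HasExcluded (G : MG) : Prop :=
  -- (1) a 3-cycle in which at least one connection has size at least 2
  (∃ a b c : G.V, a ≠ b ∧ a ≠ c ∧ b ≠ c ∧
      2 ≤ G.mult a b ∧ 1 ≤ G.mult a c ∧ 1 ≤ G.mult b c) ∨
  -- (2) a 4-cycle with at least three connections of size at least 2 and an
  -- add-on glued at a vertex incident to two of them
  (∃ a b c d : G.V, ∃ S : Set G.V,
      a ≠ b ∧ a ≠ c ∧ a ≠ d ∧ b ≠ c ∧ b ≠ d ∧ c ≠ d ∧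
      2 ≤ G.mult a b ∧ 2 ≤ G.mult b c ∧ 2 ≤ G.mult c d ∧ 1 ≤ G.mult d a ∧
      AddOnAt G b S ∧ S ∩ {a, c, d} = ∅) ∨
  -- (3) a 5-cycle with all connections of size at least 2 and add-ons glued at
  -- two non-adjacent vertices of the cycle
  (∃ v₀ v₁ v₂ v₃ v₄ : G.V, ∃ S T : Set G.V,
      v₀ ≠ v₁ ∧ v₀ ≠ v₂ ∧ v₀ ≠ v₃ ∧ v₀ ≠ v₄ ∧ v₁ ≠ v₂ ∧ v₁ ≠ v₃ ∧ v₁ ≠ v₄ ∧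
      v₂ ≠ v₃ ∧ v₂ ≠ v₄ ∧ v₃ ≠ v₄ ∧
      2 ≤ G.mult v₀ v₁ ∧ 2 ≤ G.mult v₁ v₂ ∧ 2 ≤ G.mult v₂ v₃ ∧
      2 ≤ G.mult v₃ v₄ ∧ 2 ≤ G.mult v₄ v₀ ∧
      AddOnAt G v₀ S ∧ AddOnAt G v₂ T ∧
      S ∩ {v₁, v₂, v₃, v₄} = ∅ ∧ T ∩ {v₀, v₁, v₃, v₄} = ∅ ∧ S ∩ T = ∅) ∨
  -- (4) a 4-cycle with three connections of size at least 2, whose fourth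
  -- connection has size 1 and lies in a triangle, with add-ons glued at both
  -- vertices of that connection
  (∃ a b c d e : G.V, ∃ S T : Set G.V,
      a ≠ b ∧ a ≠ c ∧ a ≠ d ∧ a ≠ e ∧ b ≠ c ∧ b ≠ d ∧ b ≠ e ∧
      c ≠ d ∧ c ≠ e ∧ d ≠ e ∧
      2 ≤ G.mult a b ∧ 2 ≤ G.mult b c ∧ 2 ≤ G.mult c d ∧ G.mult d a = 1 ∧
      1 ≤ G.mult d e ∧ 1 ≤ G.mult e a ∧
      AddOnAt G a S ∧ AddOnAt G d T ∧
      S ∩ {b, c, d, e} = ∅ ∧ T ∩ {a, b, c, e} = ∅ ∧ S ∩ T = ∅)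

/-- The doubling of a simple graph: every edge is replaced by a connection of
size 2. -/
def doubling {V : Type} [Fintype V] (H : SimpleGraph V) : MG where
  V := V
  fin := inferInstance
  mult u v := if H.Adj u v then 2 else 0
  symm := by
    intro u v
    try dsimp only
    by_cases h : H.Adj u v
    · rw [if_pos h, if_pos h.symm]
    · rw [if_neg h, if_neg fun h' => h h'.symm]
  loopless := fun v => if_neg (H.loopless.irrefl v)

end MG

end

/-- If `G` is a 2-connected multigraph and `G'` is obtained from `G`
by a YY-Δ transformation, then `G'` is 2-connected. -/
lemma rtg_map {α β : Type*} {r : α → α → Prop} {r' : β → β → Prop} (f : α → β)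
    (h : ∀ a b, r a b → Relation.ReflTransGen r' (f a) (f b)) {a b : α}
    (hab : Relation.ReflTransGen r a b) :
    Relation.ReflTransGen r' (f a) (f b) := by
  induction hab with
  | refl => exact .refl
  | tail _ hbc ih => exact ih.trans (h _ _ hbc)

lemma triCount_eq_one {V : Type} {u v w a b : V}
    (ha : a = u ∨ a = v ∨ a = w) (hb : b = u ∨ b = v ∨ b = w) (hab : a ≠ b) :
    MG.triCount u v w a b = 1 := by
  unfold MG.triCount
  rw [if_pos]
  simp only [Set.mem_insert_iff, Set.mem_singleton_iff]
  rcases ha with rfl | rfl | rfl <;> rcases hb with rfl | rfl | rfl <;>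
    first
      | exact absurd rfl hab
      | exact Or.inl rfl
      | exact Or.inl Sym2.eq_swap
      | exact Or.inr (Or.inl rfl)
      | exact Or.inr (Or.inl Sym2.eq_swap)
      | exact Or.inr (Or.inr rfl)
      | exact Or.inr (Or.inr Sym2.eq_swap)

lemma MG.Iso.kConnected {G H : MG} (h : G.Iso H) {k : ℕ}
    (hG : G.KConnected k) : H.KConnected k := by
  letI := G.fin
  letI := H.fin
  obtain ⟨e, he⟩ := h
  constructor
  · have : G.order = H.order := Fintype.card_congr e
    exact this ▸ hG.1
  · intro S hS
    set S' : Set G.V := e ⁻¹' S with hS'def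
    have hcard : S'.ncard = S.ncard := by
      have h1 : S' = e.symm '' S := by
        rw [hS'def, Equiv.image_eq_preimage_symm, Equiv.symm_symm]
      rw [h1, Set.ncard_image_of_injective _ e.symm.injective]
    have hconn := hG.2 S' (by rwa [hcard])
    obtain ⟨⟨p0, hp0⟩, hpath⟩ := hconn
    set f : (G.deleteVerts S').V → (H.deleteVerts S).V :=
      fun y => ⟨e y.1, y.2⟩ with hf
    constructor
    · exact ⟨f ⟨p0, hp0⟩⟩
    · intro p q
      have hp : p = f ⟨e.symm p.1, by
          show e.symm p.1 ∈ S' → False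
          intro hmem
          exact p.2 (by simpa [hS'def] using hmem)⟩ := by
        apply Subtype.ext
        exact (e.apply_symm_apply p.1).symm
      have hq : q = f ⟨e.symm q.1, by
          show e.symm q.1 ∈ S' → False
          intro hmem
          exact q.2 (by simpa [hS'def] using hmem)⟩ := by
        apply Subtype.ext
        exact (e.apply_symm_apply q.1).symm
      rw [hp, hq]
      apply rtg_map f
      · intro a b hab
        apply Relation.ReflTransGen.single
        show 0 < H.mult (e a.1) (e b.1)
        rw [he]
        exact hab
      · exact hpath _ _

lemma yyDelta_kConnected (G : MG) (x u v w : G.V) (hwye : G.IsWye x u v w)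
    (hG : G.KConnected 2) : (G.yyDelta x u v w).KConnected 2 := by
  letI := G.fin
  obtain ⟨huv, huw, hvw, hxu, hxv, hxw, hmu, hmv, hmw, hzero⟩ := hwye
  constructor
  · show 2 < @Fintype.card _ (G.yyDelta x u v w).fin
    letI := (G.yyDelta x u v w).fin
    exact Fintype.two_lt_card_iff.mpr
      ⟨⟨u, Ne.symm hxu⟩, ⟨v, Ne.symm hxv⟩, ⟨w, Ne.symm hxw⟩,
        fun hEq => huv (congrArg Subtype.val hEq),
        fun hEq => huw (congrArg Subtype.val hEq),
        fun hEq => hvw (congrArg Subtype.val hEq)⟩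
  · intro S hS
    letI := (G.yyDelta x u v w).fin
    have hS1 : S.ncard ≤ 1 := by omega
    -- choose a ∈ {u,v,w} with ⟨a,_⟩ ∉ S
    have hone : ∀ p q : {y : G.V // y ≠ x}, p ∈ S → q ∈ S → p = q := by
      intro p q hp hq
      by_contra hne
      have hfin : S.Finite := S.toFinite
      have : 1 < S.ncard := (Set.one_lt_ncard_iff hfin).mpr ⟨p, q, hp, hq, hne⟩
      omega
    obtain ⟨a, hau, hax, haS⟩ :
        ∃ a : G.V, (a = u ∨ a = v ∨ a = w) ∧ (a ≠ x) ∧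
          ∀ h : a ≠ x, (⟨a, h⟩ : {y : G.V // y ≠ x}) ∉ S := by
      by_cases hu : (⟨u, Ne.symm hxu⟩ : {y : G.V // y ≠ x}) ∈ S
      · refine ⟨v, Or.inr (Or.inl rfl), Ne.symm hxv, fun h hv => ?_⟩
        have := hone _ _ hu hv
        exact huv (congrArg Subtype.val this)
      · exact ⟨u, Or.inl rfl, Ne.symm hxu, fun _ => hu⟩
    set S' : Set G.V := Subtype.val '' S with hS'def
    have hxS' : x ∉ S' := by
      rintro ⟨⟨y, hy⟩, -, hEq⟩
      exact hy hEq
    have hcard : S'.ncard < 2 := by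
      have := Set.ncard_image_of_injective (S : Set {y : G.V // y ≠ x})
        (Subtype.val_injective (p := fun y => y ≠ x))
      exact lt_of_eq_of_lt this hS
    have hconn := hG.2 S' hcard
    -- the map from G \ S' to (yyDelta) \ S sending x to a
    have hmem : ∀ y : G.V, y ∉ S' → ∀ h : y ≠ x,
        (⟨y, h⟩ : {z : G.V // z ≠ x}) ∉ S := by
      intro y hy h hmemS
      exact hy ⟨⟨y, h⟩, hmemS, rfl⟩
    let g : (G.deleteVerts S').V → ((G.yyDelta x u v w).deleteVerts S).V :=
      fun y =>
        if hyx : y.1 = x then ⟨⟨a, hax⟩, haS hax⟩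
        else ⟨⟨y.1, hyx⟩, hmem y.1 y.2 hyx⟩
    have key : ∀ p q : (G.deleteVerts S').V,
        (G.deleteVerts S').Adj p q →
        Relation.ReflTransGen ((G.yyDelta x u v w).deleteVerts S).Adj (g p) (g q) := by
      intro p q hpq
      have hpq' : 0 < G.mult p.1 q.1 := hpq
      have hne : p.1 ≠ q.1 := by
        intro hEq
        rw [hEq, G.loopless] at hpq'
        exact absurd hpq' (lt_irrefl 0)
      have adjstep : ∀ (b c : G.V) (hb : b ≠ x) (hc : c ≠ x)
          (hbS : (⟨b, hb⟩ : {z : G.V // z ≠ x}) ∉ S)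
          (hcS : (⟨c, hc⟩ : {z : G.V // z ≠ x}) ∉ S),
          0 < G.mult b c + MG.triCount u v w b c → b ≠ c →
          Relation.ReflTransGen ((G.yyDelta x u v w).deleteVerts S).Adj
            ⟨⟨b, hb⟩, hbS⟩ ⟨⟨c, hc⟩, hcS⟩ := by
        intro b c hb hc hbS hcS hpos hbc
        apply Relation.ReflTransGen.single
        show 0 < (G.yyDelta x u v w).mult ⟨b, hb⟩ ⟨c, hc⟩
        show 0 < if (⟨b, hb⟩ : {z : G.V // z ≠ x}) = ⟨c, hc⟩ then 0
          else G.mult b c + MG.triCount u v w b c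
        rw [if_neg (fun hEq => hbc (congrArg Subtype.val hEq))]
        exact hpos
      by_cases hpx : p.1 = x
      · -- p is x, q is a neighbour of x, hence ∈ {u,v,w}
        have hq3 : q.1 = u ∨ q.1 = v ∨ q.1 = w := by
          by_contra hq
          push_neg at hq
          rw [hpx, hzero q.1 hq.1 hq.2.1 hq.2.2] at hpq'
          exact absurd hpq' (lt_irrefl 0)
        have hqx : q.1 ≠ x := fun hEq => hne (hpx.trans hEq.symm)
        have hg1 : g p = ⟨⟨a, hax⟩, haS hax⟩ := dif_pos hpx
        have hg2 : g q = ⟨⟨q.1, hqx⟩, hmem q.1 q.2 hqx⟩ := dif_neg hqx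
        rw [hg1, hg2]
        by_cases haq : a = q.1
        · subst haq
          exact Relation.ReflTransGen.refl
        · apply adjstep
          · rw [triCount_eq_one hau hq3 haq]
            omega
          · exact haq
      · by_cases hqx : q.1 = x
        · -- symmetric
          have hp3 : p.1 = u ∨ p.1 = v ∨ p.1 = w := by
            by_contra hp
            push_neg at hp
            rw [hqx, G.symm, hzero p.1 hp.1 hp.2.1 hp.2.2] at hpq'
            exact absurd hpq' (lt_irrefl 0)
          have hg1 : g p = ⟨⟨p.1, hpx⟩, hmem p.1 p.2 hpx⟩ := dif_neg hpx
          have hg2 : g q = ⟨⟨a, hax⟩, haS hax⟩ := dif_pos hqx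
          rw [hg1, hg2]
          by_cases hpa : p.1 = a
          · subst hpa
            exact Relation.ReflTransGen.refl
          · apply adjstep
            · rw [triCount_eq_one hp3 hau (fun hEq => hpa hEq)]
              omega
            · exact fun hEq => hpa hEq
        · have hg1 : g p = ⟨⟨p.1, hpx⟩, hmem p.1 p.2 hpx⟩ := dif_neg hpx
          have hg2 : g q = ⟨⟨q.1, hqx⟩, hmem q.1 q.2 hqx⟩ := dif_neg hqx
          rw [hg1, hg2]
          apply adjstep
          · omega
          · exact hne
    constructor
    · exact ⟨⟨⟨a, hax⟩, haS hax⟩⟩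
    · intro p q
      have hpv : p.1.1 ∉ S' := fun hmemS => by
        obtain ⟨z, hz, hzeq⟩ := hmemS
        have : z = p.1 := Subtype.ext hzeq
        exact p.2 (this ▸ hz)
      have hqv : q.1.1 ∉ S' := fun hmemS => by
        obtain ⟨z, hz, hzeq⟩ := hmemS
        have : z = q.1 := Subtype.ext hzeq
        exact q.2 (this ▸ hz)
      have hp : p = g ⟨p.1.1, hpv⟩ := by
        have : g ⟨p.1.1, hpv⟩ = ⟨⟨p.1.1, p.1.2⟩, hmem _ hpv p.1.2⟩ := dif_neg p.1.2
        rw [this]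
        rfl

      have hq : q = g ⟨q.1.1, hqv⟩ := by
        have : g ⟨q.1.1, hqv⟩ = ⟨⟨q.1.1, q.1.2⟩, hmem _ hqv q.1.2⟩ := dif_neg q.1.2
        rw [this]
        rfl

      rw [hp, hq]
      exact rtg_map g key (hconn.2 _ _)

theorem stmt_5 (G G' : MG) (hG : G.KConnected 2) (h : MG.YYDeltaStep G G') :
    G'.KConnected 2 := by
  obtain ⟨x, u, v, w, hwye, hiso⟩ := h
  exact hiso.kConnected (yyDelta_kConnected G x u v w hwye hG)
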